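/- Let σμ be the identity x t1 x y t2 y ≈ x t1 y x t2 y, σ1 the identity x y t1 x t2 y ≈ y x t1 x t2 y, and σ2 the identity x t1 y t2 x y ≈ x t1 y t2 y x. Then: (i) an identity u ≈ v is a consequence of {σμ}^δ if and only if it is block-balanced and for all variables x, y ∈ con(u), the first occurrence of x precedes the first occurrence of y in u iff it does in v, and the last occurrence of x precedes the last occurrence of y in u iff it does in v; (ii) an identity u ≈ v is a consequence of {σ1, σμ}^δ if and only if it is block-balanced and for all x, y ∈ con(u), the last occurrence of x precedes the last occurrence of y in u iff it does in v; (iii) an identity u ≈ v is a consequence of {σ2, σμ}^δ if and only if it is block-balanced and for all x, y ∈ con(u), the first occurrence of x precedes the first occurrence of y in u iff it does in v. -/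

import Mathlib

/-- Words over a countably infinite alphabet of variables (identified with ℕ). -/
abbrev Wd := List ℕ

/-- Evaluation of a word in a monoid under an assignment of the variables. -/
def evalWord {M : Type*} [Monoid M] (φ : ℕ → M) (u : Wd) : M := (u.map φ).prod

/-- A monoid `M` satisfies the identity `e = (u, v)`. -/
def Sat (M : Type*) [Monoid M] (e : Wd × Wd) : Prop :=
  ∀ φ : ℕ → M, evalWord φ e.1 = evalWord φ e.2

/-- The identity `e` is a consequence of the set of identities `Γ`:
every monoid satisfying all identities of `Γ` satisfies `e`. -/
def Consequence (Γ : Set (Wd × Wd)) (e : Wd × Wd) : Prop :=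
  ∀ (M : Type) [Monoid M], (∀ f ∈ Γ, Sat M f) → Sat M e

/-- The content of a word: the set of variables occurring in it. -/
def conW (u : Wd) : Set ℕ := {x | x ∈ u}

/-- The set of linear (exactly once occurring) variables of a word. -/
def linW (u : Wd) : Set ℕ := {x | u.count x = 1}

/-- The set of non-linear (more than once occurring) variables of a word. -/
def nonW (u : Wd) : Set ℕ := {x | 2 ≤ u.count x}

/-- `restrict u X` is the word obtained from `u` by deleting all occurrences of
all variables not in `X`. -/
noncomputable def restrict (u : Wd) (X : Set ℕ) : Wd :=
  u.filter (fun a => @decide (a ∈ X) (Classical.propDecidable _))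

/-- The closure of a set of identities under deleting variables. -/
def delta (Γ : Set (Wd × Wd)) : Set (Wd × Wd) :=
  {e | ∃ f ∈ Γ, ∃ X : Set ℕ, e = (restrict f.1 X, restrict f.2 X)}

/-- A word is almost-linear if it has at most one non-linear variable. -/
def AlmostLinearW (u : Wd) : Prop := ∀ x y, 2 ≤ u.count x → 2 ≤ u.count y → x = y

/-- An identity is almost-linear if both of its sides are almost-linear words. -/
def AlmostLinearId (e : Wd × Wd) : Prop := AlmostLinearW e.1 ∧ AlmostLinearW e.2

/-- An identity is regular if both sides have the same content. -/
def RegularId (e : Wd × Wd) : Prop := conW e.1 = conW e.2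

/-- A word `u` is an isoterm for a monoid `M` if the only word `v` with
`M ⊨ u ≈ v` is `u` itself. -/
def Isoterm (M : Type*) [Monoid M] (u : Wd) : Prop := ∀ v : Wd, Sat M (u, v) → v = u

/-- An identity `u ≈ v` is block-balanced if `u(x, lin u) = v(x, lin u)`
for every variable `x`. -/
def BlockBalanced (e : Wd × Wd) : Prop :=
  ∀ x : ℕ, restrict e.1 ({x} ∪ linW e.1) = restrict e.2 ({x} ∪ linW e.1)

/-- A monoid is finitely based: some finite set of its identities implies all of them. -/
def FinitelyBased (S : Type*) [Monoid S] : Prop :=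
  ∃ Γ : Set (Wd × Wd), Γ.Finite ∧ (∀ e ∈ Γ, Sat S e) ∧
    ∀ e : Wd × Wd, Sat S e → Consequence Γ e

/-- Index of the first occurrence of a variable in a word. -/
def firstIdx (u : Wd) (x : ℕ) : ℕ := u.idxOf x

/-- Index of the last occurrence of a variable in a word. -/
def lastIdx (u : Wd) (x : ℕ) : ℕ := u.length - 1 - u.reverse.idxOf x

/-- σ1 : x y t1 x t2 y ≈ y x t1 x t2 y, with x=0, y=1, t1=2, t2=3. -/
def sigma1 : Wd × Wd := ([0,1,2,0,3,1], [1,0,2,0,3,1])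

/-- σμ : x t1 x y t2 y ≈ x t1 y x t2 y, with x=0, y=1, t1=2, t2=3. -/
def sigmaMu : Wd × Wd := ([0,2,0,1,3,1], [0,2,1,0,3,1])

/-- σ2 : x t1 y t2 x y ≈ x t1 y t2 y x, with x=0, y=1, t1=2, t2=3. -/
def sigma2 : Wd × Wd := ([0,2,1,3,0,1], [0,2,1,3,1,0])

/-- The order of first occurrences of variables is the same on both sides. -/
def FirstOrderSame (e : Wd × Wd) : Prop :=
  ∀ x ∈ conW e.1, ∀ y ∈ conW e.1,
    (firstIdx e.1 x < firstIdx e.1 y ↔ firstIdx e.2 x < firstIdx e.2 y)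

/-- The order of last occurrences of variables is the same on both sides. -/
def LastOrderSame (e : Wd × Wd) : Prop :=
  ∀ x ∈ conW e.1, ∀ y ∈ conW e.1,
    (lastIdx e.1 x < lastIdx e.1 y ↔ lastIdx e.2 x < lastIdx e.2 y)

/-! ### Part 1: substitution and equational logic -/

attribute [local instance] Classical.propDecidable

def substW (σ : ℕ → Wd) (u : Wd) : Wd := u.flatMap σ

@[simp] lemma substW_nil (σ : ℕ → Wd) : substW σ [] = [] := rfl
@[simp] lemma substW_cons (σ : ℕ → Wd) (a : ℕ) (u : Wd) :
    substW σ (a :: u) = σ a ++ substW σ u := rfl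
@[simp] lemma substW_append (σ : ℕ → Wd) (u v : Wd) :
    substW σ (u ++ v) = substW σ u ++ substW σ v := by
  simp [substW]

lemma substW_id (u : Wd) : substW (fun n => [n]) u = u := by
  induction u with
  | nil => rfl
  | cons a u ih => simp [ih]

lemma substW_comp (σ τ : ℕ → Wd) (u : Wd) :
    substW σ (substW τ u) = substW (fun n => substW σ (τ n)) u := by
  induction u with
  | nil => rfl
  | cons a u ih => simp [ih]

@[simp] lemma evalWord_nil {M : Type*} [Monoid M] (φ : ℕ → M) : evalWord φ [] = 1 := rfl
@[simp] lemma evalWord_cons {M : Type*} [Monoid M] (φ : ℕ → M) (a : ℕ) (u : Wd) :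
    evalWord φ (a :: u) = φ a * evalWord φ u := by
  simp [evalWord]
@[simp] lemma evalWord_append {M : Type*} [Monoid M] (φ : ℕ → M) (u v : Wd) :
    evalWord φ (u ++ v) = evalWord φ u * evalWord φ v := by
  simp [evalWord]

lemma evalWord_substW {M : Type*} [Monoid M] (φ : ℕ → M) (σ : ℕ → Wd) (u : Wd) :
    evalWord φ (substW σ u) = evalWord (fun n => evalWord φ (σ n)) u := by
  induction u with
  | nil => rfl
  | cons a u ih => simp [ih]

/-- Equational logic derivability. -/
inductive Drv (Γ : Set (Wd × Wd)) : Wd → Wd → Prop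
  | base {u v : Wd} : (u, v) ∈ Γ → Drv Γ u v
  | refl (u : Wd) : Drv Γ u u
  | symm {u v : Wd} : Drv Γ u v → Drv Γ v u
  | trans {u v w : Wd} : Drv Γ u v → Drv Γ v w → Drv Γ u w
  | mul {u v u' v' : Wd} : Drv Γ u v → Drv Γ u' v' → Drv Γ (u ++ u') (v ++ v')
  | subst (σ : ℕ → Wd) {u v : Wd} : Drv Γ u v → Drv Γ (substW σ u) (substW σ v)

lemma Drv.ctx {Γ : Set (Wd × Wd)} {u v : Wd} (p q : Wd) (h : Drv Γ u v) :
    Drv Γ (p ++ u ++ q) (p ++ v ++ q) :=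
  Drv.mul (Drv.mul (Drv.refl p) h) (Drv.refl q)

lemma sat_of_rel {Γ : Set (Wd × Wd)} {u v : Wd} (h : Drv Γ u v)
    (M : Type*) [Monoid M] (hM : ∀ f ∈ Γ, Sat M f) : Sat M (u, v) := by
  induction h with
  | base hb => exact hM _ hb
  | refl u => intro φ; rfl
  | symm h ih => intro φ; exact (ih φ).symm
  | trans h1 h2 ih1 ih2 => intro φ; exact (ih1 φ).trans (ih2 φ)
  | mul h1 h2 ih1 ih2 => intro φ; simp only [evalWord_append]; rw [ih1 φ, ih2 φ]
  | subst σ h ih =>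
      intro φ
      simp only [evalWord_substW]
      exact ih _

lemma consequence_of_rel {Γ : Set (Wd × Wd)} {u v : Wd} (h : Drv Γ u v) :
    Consequence Γ (u, v) := fun M _ hM => sat_of_rel h M hM

/-- The quotient monoid (relatively free monoid). -/
def DrvSetoid (Γ : Set (Wd × Wd)) : Setoid Wd :=
  ⟨Drv Γ, fun u => Drv.refl u, Drv.symm, Drv.trans⟩

def FreeM (Γ : Set (Wd × Wd)) : Type := Quotient (DrvSetoid Γ)

instance FreeM.monoid (Γ : Set (Wd × Wd)) : Monoid (FreeM Γ) where
  mul := Quotient.map₂ (· ++ ·) (fun _ _ h1 _ _ h2 => Drv.mul h1 h2)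
  one := Quotient.mk _ []
  mul_assoc := fun a b c => Quotient.inductionOn₃ a b c fun a b c =>
    Quotient.sound (show Drv Γ ((a ++ b) ++ c) (a ++ (b ++ c)) from
      List.append_assoc a b c ▸ Drv.refl ((a ++ b) ++ c))
  one_mul := fun a => Quotient.inductionOn a fun a =>
    Quotient.sound (show Drv Γ ([] ++ a) a from Drv.refl a)
  mul_one := fun a => Quotient.inductionOn a fun a =>
    Quotient.sound (show Drv Γ (a ++ []) a from by rw [List.append_nil]; exact Drv.refl a)

def FreeM.mk (Γ : Set (Wd × Wd)) (u : Wd) : FreeM Γ := Quotient.mk (DrvSetoid Γ) u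

lemma FreeM.mk_mul {Γ : Set (Wd × Wd)} (u v : Wd) :
    (FreeM.mk Γ u) * (FreeM.mk Γ v) = FreeM.mk Γ (u ++ v) :=
  Quotient.map₂_mk _ _ u v

lemma FreeM.one_def {Γ : Set (Wd × Wd)} : (1 : FreeM Γ) = FreeM.mk Γ [] := rfl

lemma FreeM.eval {Γ : Set (Wd × Wd)} (σ : ℕ → Wd) (u : Wd) :
    evalWord (fun n => FreeM.mk Γ (σ n)) u = FreeM.mk Γ (substW σ u) := by
  induction u with
  | nil => rw [evalWord_nil, substW_nil, FreeM.one_def]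
  | cons a u ih => rw [evalWord_cons, ih, substW_cons, FreeM.mk_mul]

lemma rel_of_consequence {Γ : Set (Wd × Wd)} {u v : Wd}
    (h : Consequence Γ (u, v)) : Drv Γ u v := by
  have hsat : ∀ f ∈ Γ, Sat (FreeM Γ) f := by
    intro f hf φ
    have hrep : ∀ n, ∃ w : Wd, φ n = FreeM.mk Γ w := by
      intro n; exact ⟨(Quotient.exists_rep (φ n)).choose, (Quotient.exists_rep (φ n)).choose_spec.symm⟩
    choose σ hσ using hrep
    have hφ : φ = fun n => FreeM.mk Γ (σ n) := funext hσ
    rw [hφ, FreeM.eval, FreeM.eval]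
    exact Quotient.sound (Drv.subst σ (Drv.base hf))
  have := h (FreeM Γ) hsat (fun n => FreeM.mk Γ [n])
  rw [FreeM.eval, FreeM.eval, substW_id, substW_id] at this
  exact Quotient.exact this

/-! ### delta collapse -/

lemma restrict_cons (a : ℕ) (u : Wd) (X : Set ℕ) :
    restrict (a :: u) X = (if a ∈ X then [a] else []) ++ restrict u X := by
  rw [restrict, restrict, List.filter_cons]
  by_cases h : a ∈ X
  · rw [decide_eq_true h]; simp [h]
  · rw [decide_eq_false h]; simp [h]

@[simp] lemma restrict_nil (X : Set ℕ) : restrict [] X = [] := rfl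

lemma restrict_eq_substW (u : Wd) (X : Set ℕ) :
    restrict u X = substW (fun n => if n ∈ X then [n] else []) u := by
  induction u with
  | nil => rfl
  | cons a u ih => rw [restrict_cons, substW_cons, ih]

lemma restrict_univ (u : Wd) : restrict u Set.univ = u := by
  rw [restrict_eq_substW]
  simp [substW_id]

lemma consequence_delta_iff (Γ : Set (Wd × Wd)) (e : Wd × Wd) :
    Consequence (delta Γ) e ↔ Consequence Γ e := by
  constructor
  · intro h M _ hM
    apply h M
    rintro f ⟨g, hg, X, rfl⟩
    intro φ
    have : ∀ w : Wd, evalWord φ (restrict w X) =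
        evalWord (fun n => if n ∈ X then φ n else 1) w := by
      intro w
      rw [restrict_eq_substW, evalWord_substW]
      congr 1
      funext n
      by_cases hn : n ∈ X <;> simp [hn]
    rw [this, this]
    exact hM g hg _
  · intro h M _ hM
    apply h M
    intro f hf
    have : f ∈ delta Γ := ⟨f, hf, Set.univ, by rw [restrict_univ, restrict_univ]⟩
    exact hM f this

/-! ### Part 2: first-occurrence sequence dF and invariants -/

def dF : Wd → Wd
  | [] => []
  | a :: l => a :: dF (l.filter (· ≠ a))
termination_by l => l.length
decreasing_by
  simp only [List.length_cons, List.length_unattach]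
  exact Nat.lt_succ_of_le ((List.length_filter_le _ _).trans_eq List.length_attach)

@[simp] lemma dF_nil : dF [] = [] := by rw [dF]

lemma dF_cons (a : ℕ) (l : Wd) : dF (a :: l) = a :: dF (l.filter (· ≠ a)) := by rw [dF]

lemma mem_dF {x : ℕ} : ∀ {u : Wd}, x ∈ dF u ↔ x ∈ u
  | [] => by simp
  | a :: l => by
      rw [dF_cons]
      by_cases hx : x = a
      · subst hx; simp
      · simp only [List.mem_cons, hx, false_or]
        rw [mem_dF (u := l.filter (· ≠ a))]
        simp [hx]
termination_by u => u.length
decreasing_by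
  simp only [List.length_cons]
  exact Nat.lt_succ_of_le (List.length_filter_le _ _)

lemma dF_filter (p : ℕ → Bool) : ∀ (u : Wd), dF (u.filter p) = (dF u).filter p
  | [] => by simp
  | a :: l => by
      rw [dF_cons, List.filter_cons]
      by_cases hp : p a
      · rw [if_pos hp, dF_cons, List.filter_cons, if_pos hp, List.filter_comm,
          dF_filter p (l.filter (· ≠ a))]
      · rw [if_neg hp, List.filter_cons, if_neg hp, ← dF_filter p (l.filter (· ≠ a)),
          List.filter_comm]
        congr 1
        refine (List.filter_eq_self.mpr ?_).symm
        intro b hb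
        have hbp : p b = true := (List.mem_filter.mp hb).2
        have : b ≠ a := by rintro rfl; rw [hbp] at hp; exact hp rfl
        simpa using this
termination_by u => u.length
decreasing_by
  all_goals
    simp only [List.length_cons]
    exact Nat.lt_succ_of_le (List.length_filter_le _ _)

lemma dF_append : ∀ (u v : Wd), dF (u ++ v) = dF u ++ dF (v.filter (fun b => !(decide (b ∈ u))))
  | [], v => by simp
  | a :: u, v => by
      rw [List.cons_append, dF_cons, dF_cons, List.filter_append,
        dF_append (u.filter (· ≠ a)) (v.filter (· ≠ a))]
      simp only [List.cons_append, List.cons.injEq, true_and]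
      congr 1
      rw [List.filter_filter]
      congr 1
      apply List.filter_congr
      intro b _
      by_cases hb : b = a
      · subst hb; simp
      · by_cases hbu : b ∈ u <;> simp [hb, hbu]
termination_by u _ => u.length
decreasing_by
  simp only [List.length_cons]
  exact Nat.lt_succ_of_le (List.length_filter_le _ _)

lemma substW_filter (σ : ℕ → Wd) (p : ℕ → Bool) (u : Wd) :
    (substW σ u).filter p = substW (fun y => (σ y).filter p) u := by
  induction u with
  | nil => rfl
  | cons a u ih => simp [List.filter_append, ih]

lemma substW_filter_ne (σ : ℕ → Wd) (a : ℕ) (hσ : σ a = []) (u : Wd) :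
    substW σ (u.filter (· ≠ a)) = substW σ u := by
  induction u with
  | nil => rfl
  | cons b u ih =>
      rw [List.filter_cons]
      by_cases hb : b = a
      · subst hb
        rw [if_neg (by simp), ih, substW_cons, hσ, List.nil_append]
      · rw [if_pos (by simpa using hb), substW_cons, substW_cons, ih]

lemma dF_substW : ∀ (u : Wd) (σ : ℕ → Wd), dF (substW σ u) = dF (substW σ (dF u))
  | [], σ => by simp
  | a :: l, σ => by
      rw [dF_cons, substW_cons, substW_cons, dF_append, dF_append]
      congr 1
      rw [substW_filter, substW_filter]
      have hkey : ∀ w : Wd, substW (fun y => (σ y).filter fun b => !decide (b ∈ σ a)) w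
          = substW (fun y => (σ y).filter fun b => !decide (b ∈ σ a)) (w.filter (· ≠ a)) := by
        intro w
        rw [substW_filter_ne]
        simp
      rw [hkey l, hkey (dF (l.filter (· ≠ a)))]
      have hff : (dF (l.filter (· ≠ a))).filter (· ≠ a) = dF (l.filter (· ≠ a)) := by
        rw [← dF_filter, List.filter_filter]
        congr 1
        apply List.filter_congr
        intro b _
        by_cases hb : b = a <;> simp [hb]
      rw [hff]
      exact dF_substW (l.filter (· ≠ a)) _
termination_by u => u.length
decreasing_by
  simp only [List.length_cons]
  exact Nat.lt_succ_of_le (List.length_filter_le _ _)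

lemma mem_iff_of_dF_eq {u v : Wd} (h : dF u = dF v) : ∀ x, x ∈ u ↔ x ∈ v := by
  intro x
  rw [← mem_dF, h, mem_dF]

lemma drv_dF {Γ : Set (Wd × Wd)} (hΓ : ∀ f ∈ Γ, dF f.1 = dF f.2) {u v : Wd}
    (h : Drv Γ u v) : dF u = dF v := by
  induction h with
  | base hb => exact hΓ _ hb
  | refl u => rfl
  | symm h ih => exact ih.symm
  | trans h1 h2 ih1 ih2 => exact ih1.trans ih2
  | @mul u v u' v' h1 h2 ih1 ih2 =>
      rw [dF_append, dF_append, ih1]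
      congr 1
      rw [dF_filter, ih2, ← dF_filter]
      congr 1
      apply List.filter_congr
      intro b _
      have := mem_iff_of_dF_eq ih1 b
      by_cases hb : b ∈ u
      · simp [hb, (this.mp hb)]
      · simp [hb, mt this.mpr hb]
  | subst σ h ih => rw [dF_substW _ σ, ih, ← dF_substW]

/-! ### Almost-linear invariance (for block-balance) -/

def ALQ (u v : Wd) : Prop :=
  ∀ σ : ℕ → Wd, (AlmostLinearW (substW σ u) ∨ AlmostLinearW (substW σ v)) →
    substW σ u = substW σ v

lemma AL_append_left {a b : Wd} (h : AlmostLinearW (a ++ b)) : AlmostLinearW a := by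
  intro x y hx hy
  apply h x y
  · calc 2 ≤ a.count x := hx
      _ ≤ (a ++ b).count x := by rw [List.count_append]; omega
  · calc 2 ≤ a.count y := hy
      _ ≤ (a ++ b).count y := by rw [List.count_append]; omega

lemma AL_append_right {a b : Wd} (h : AlmostLinearW (a ++ b)) : AlmostLinearW b := by
  intro x y hx hy
  apply h x y
  · calc 2 ≤ b.count x := hx
      _ ≤ (a ++ b).count x := by rw [List.count_append]; omega
  · calc 2 ≤ b.count y := hy
      _ ≤ (a ++ b).count y := by rw [List.count_append]; omega

lemma comm_of_cross_eq {a b : Wd} (h : ∀ z ∈ a, ∀ w ∈ b, z = w) : a ++ b = b ++ a := by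
  rcases a with _ | ⟨x, a'⟩
  · simp
  rcases b with _ | ⟨y, b'⟩
  · simp
  have hx : x = y := h x (by simp) y (by simp)
  have ha : ∀ z ∈ (x :: a' : Wd), z = y := fun z hz => h z hz y (by simp)
  have hb : ∀ w ∈ (y :: b' : Wd), w = y := by
    intro w hw
    rw [← h x (by simp) w hw, hx]
  rw [List.eq_replicate_of_mem ha, List.eq_replicate_of_mem hb,
    ← List.replicate_add, ← List.replicate_add, Nat.add_comm]

lemma drv_ALQ {Γ : Set (Wd × Wd)} (hΓ : ∀ f ∈ Γ, ALQ f.1 f.2) {u v : Wd}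
    (h : Drv Γ u v) : ALQ u v := by
  induction h with
  | base hb => exact hΓ _ hb
  | refl u => exact fun σ _ => rfl
  | symm h ih => exact fun σ hal => (ih σ hal.symm).symm
  | trans h1 h2 ih1 ih2 =>
      intro σ hal
      rcases hal with hal | hal
      · have e1 := ih1 σ (Or.inl hal)
        have e2 := ih2 σ (Or.inl (e1 ▸ hal))
        exact e1.trans e2
      · have e2 := ih2 σ (Or.inr hal)
        have e1 := ih1 σ (Or.inr (e2 ▸ hal))
        exact e1.trans e2
  | @mul u v u' v' h1 h2 ih1 ih2 =>
      intro σ hal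
      rw [substW_append, substW_append]
      rcases hal with hal | hal
      · rw [substW_append] at hal
        rw [ih1 σ (Or.inl (AL_append_left hal)), ih2 σ (Or.inl (AL_append_right hal))]
      · rw [substW_append] at hal
        rw [ih1 σ (Or.inr (AL_append_left hal)), ih2 σ (Or.inr (AL_append_right hal))]
  | subst τ h ih =>
      intro σ hal
      rw [substW_comp, substW_comp]
      apply ih
      rw [← substW_comp, ← substW_comp]
      exact hal

/-! ### Part 3: base identities facts, reverse, soundness bundles -/

lemma substW_reverse (σ : ℕ → Wd) (u : Wd) :
    (substW σ u).reverse = substW (fun n => (σ n).reverse) u.reverse := by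
  induction u with
  | nil => rfl
  | cons a u ih => simp [ih]

def revSet (Γ : Set (Wd × Wd)) : Set (Wd × Wd) := {e | (e.1.reverse, e.2.reverse) ∈ Γ}

lemma drv_reverse {Γ : Set (Wd × Wd)} {u v : Wd} (h : Drv Γ u v) :
    Drv (revSet Γ) u.reverse v.reverse := by
  induction h with
  | @base u v hb => exact Drv.base (by simpa [revSet] using hb)
  | refl u => exact Drv.refl _
  | symm h ih => exact Drv.symm ih
  | trans h1 h2 ih1 ih2 => exact Drv.trans ih1 ih2
  | mul h1 h2 ih1 ih2 => rw [List.reverse_append, List.reverse_append]; exact Drv.mul ih2 ih1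
  | subst σ h ih =>
      rw [substW_reverse, substW_reverse]
      exact Drv.subst _ ih

lemma dF_sigmaMu : dF sigmaMu.1 = dF sigmaMu.2 := by
  show dF [0,2,0,1,3,1] = dF [0,2,1,0,3,1]
  norm_num [dF_cons, List.filter]

lemma dF_rev_sigmaMu : dF sigmaMu.1.reverse = dF sigmaMu.2.reverse := by
  show dF [1,3,1,0,2,0] = dF [1,3,0,1,2,0]
  norm_num [dF_cons, List.filter]

lemma dF_rev_sigma1 : dF sigma1.1.reverse = dF sigma1.2.reverse := by
  show dF [1,3,0,2,1,0] = dF [1,3,0,2,0,1]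
  norm_num [dF_cons, List.filter]

lemma count_comm_aux {σ : ℕ → Wd} {a c : Wd}
    (hal : AlmostLinearW (σ 0 ++ (a ++ (σ 0 ++ (σ 1 ++ (c ++ σ 1)))))) :
    σ 0 ++ σ 1 = σ 1 ++ σ 0 := by
  apply comm_of_cross_eq
  intro z hz w hw
  apply hal z w
  · have h1 : 0 < (σ 0).count z := List.count_pos_iff.mpr hz
    simp only [List.count_append]
    omega
  · have h1 : 0 < (σ 1).count w := List.count_pos_iff.mpr hw
    simp only [List.count_append]
    omega

lemma ALQ_sigmaMu : ALQ sigmaMu.1 sigmaMu.2 := by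
  intro σ hal
  have hc : σ 0 ++ σ 1 = σ 1 ++ σ 0 := by
    rcases hal with hal | hal
    · apply count_comm_aux (a := σ 2) (c := σ 3)
      simpa [sigmaMu] using hal
    · apply comm_of_cross_eq
      intro z hz w hw
      apply hal z w
      · have h1 : 0 < (σ 0).count z := List.count_pos_iff.mpr hz
        simp only [sigmaMu, substW_cons, substW_nil, List.append_nil, List.count_append]
        omega
      · have h1 : 0 < (σ 1).count w := List.count_pos_iff.mpr hw
        simp only [sigmaMu, substW_cons, substW_nil, List.append_nil, List.count_append]
        omega
  simp only [sigmaMu, substW_cons, substW_nil, List.append_nil]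
  congr 1
  congr 1
  rw [← List.append_assoc, ← List.append_assoc, hc]; simp [List.append_assoc]

lemma ALQ_sigma1 : ALQ sigma1.1 sigma1.2 := by
  intro σ hal
  have hc : σ 0 ++ σ 1 = σ 1 ++ σ 0 := by
    apply comm_of_cross_eq
    intro z hz w hw
    have h1 : 0 < (σ 0).count z := List.count_pos_iff.mpr hz
    have h2 : 0 < (σ 1).count w := List.count_pos_iff.mpr hw
    rcases hal with hal | hal
    · apply hal z w <;>
      · simp only [sigma1, substW_cons, substW_nil, List.append_nil, List.count_append]
        omega
    · apply hal z w <;>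
      · simp only [sigma1, substW_cons, substW_nil, List.append_nil, List.count_append]
        omega
  simp only [sigma1, substW_cons, substW_nil, List.append_nil]
  rw [← List.append_assoc, hc, List.append_assoc]

lemma bb_of_ALQ {u v : Wd} (hq : ALQ u v) : BlockBalanced (u, v) := by
  intro x
  have hAL : AlmostLinearW (restrict u ({x} ∪ linW u)) := by
    intro y z h2y h2z
    have hy : y = x := by
      by_contra hyx
      have hmem : y ∈ restrict u ({x} ∪ linW u) := by
        have : 0 < (restrict u ({x} ∪ linW u)).count y := by omega
        exact List.count_pos_iff.mp this
      have hyX : y ∈ ({x} : Set ℕ) ∪ linW u := by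
        have := List.mem_filter.mp hmem
        exact @of_decide_eq_true _ (Classical.propDecidable _) this.2
      have hylin : y ∈ linW u := by
        rcases hyX with hy | hy
        · exact absurd hy hyx
        · exact hy
      have hle : (restrict u ({x} ∪ linW u)).count y ≤ u.count y :=
        (List.filter_sublist (l := u)).count_le y
      have : u.count y = 1 := hylin
      omega
    have hz : z = x := by
      by_contra hzx
      have hmem : z ∈ restrict u ({x} ∪ linW u) := by
        have : 0 < (restrict u ({x} ∪ linW u)).count z := by omega
        exact List.count_pos_iff.mp this
      have hzX : z ∈ ({x} : Set ℕ) ∪ linW u := by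
        have := List.mem_filter.mp hmem
        exact @of_decide_eq_true _ (Classical.propDecidable _) this.2
      have hzlin : z ∈ linW u := by
        rcases hzX with hz | hz
        · exact absurd hz hzx
        · exact hz
      have hle : (restrict u ({x} ∪ linW u)).count z ≤ u.count z :=
        (List.filter_sublist (l := u)).count_le z
      have : u.count z = 1 := hzlin
      omega
    rw [hy, hz]
  show restrict u ({x} ∪ linW u) = restrict v ({x} ∪ linW u)
  rw [restrict_eq_substW, restrict_eq_substW]
  apply hq
  left
  rw [← restrict_eq_substW]
  exact hAL

lemma count_eq_of_BB {u v : Wd} (h : BlockBalanced (u, v)) (y : ℕ) :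
    u.count y = v.count y := by
  have hy := h y
  have h1 : (restrict u ({y} ∪ linW u)).count y = u.count y :=
    List.count_filter (by simp)
  have h2 : (restrict v ({y} ∪ linW u)).count y = v.count y :=
    List.count_filter (by simp)
  rw [← h1, ← h2]
  exact congrArg _ hy

/-! ### Part 4: index order machinery -/

lemma idx_pos_iff {a : ℕ} {l : Wd} (b : ℕ) : 0 < (b :: l).idxOf a ↔ a ≠ b := by
  constructor
  · intro h ha
    subst ha
    rw [List.idxOf_cons_self] at h
    omega
  · intro h
    rw [List.idxOf_cons_ne _ (Ne.symm h)]
    omega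

lemma idx_filter_order (p : ℕ → Bool) : ∀ (l : Wd) (x y : ℕ), x ∈ l → y ∈ l →
    p x → p y →
    (l.idxOf x < l.idxOf y ↔ (l.filter p).idxOf x < (l.filter p).idxOf y) := by
  intro l
  induction l with
  | nil => intro x y hx; simp at hx
  | cons b t ih =>
      intro x y hx hy hpx hpy
      by_cases hpb : p b
      · rw [List.filter_cons, if_pos hpb]
        by_cases hxb : x = b
        · subst hxb
          rw [List.idxOf_cons_self, List.idxOf_cons_self]
          rw [idx_pos_iff, idx_pos_iff]
        · by_cases hyb : y = b
          · subst hyb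
            rw [List.idxOf_cons_self, List.idxOf_cons_self]
            constructor <;> (intro h; omega)
          · rw [List.idxOf_cons_ne _ (Ne.symm hxb), List.idxOf_cons_ne _ (Ne.symm hyb),
              List.idxOf_cons_ne _ (Ne.symm hxb), List.idxOf_cons_ne _ (Ne.symm hyb)]
            have hxt : x ∈ t := List.mem_of_ne_of_mem hxb hx
            have hyt : y ∈ t := List.mem_of_ne_of_mem hyb hy
            have := ih x y hxt hyt hpx hpy
            omega
      · have hxb : x ≠ b := by rintro rfl; rw [hpx] at hpb; exact hpb rfl
        have hyb : y ≠ b := by rintro rfl; rw [hpy] at hpb; exact hpb rfl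
        rw [List.filter_cons, if_neg hpb, List.idxOf_cons_ne _ (Ne.symm hxb),
          List.idxOf_cons_ne _ (Ne.symm hyb)]
        have hxt : x ∈ t := List.mem_of_ne_of_mem hxb hx
        have hyt : y ∈ t := List.mem_of_ne_of_mem hyb hy
        have := ih x y hxt hyt hpx hpy
        omega

lemma idx_dF_order : ∀ (u : Wd) (x y : ℕ), x ∈ u → y ∈ u →
    (u.idxOf x < u.idxOf y ↔ (dF u).idxOf x < (dF u).idxOf y)
  | [] => by intro x y hx; simp at hx
  | a :: l => by
      intro x y hx hy
      rw [dF_cons]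
      by_cases hxa : x = a
      · subst hxa
        rw [List.idxOf_cons_self, List.idxOf_cons_self, idx_pos_iff, idx_pos_iff]
      · by_cases hya : y = a
        · subst hya
          rw [List.idxOf_cons_self, List.idxOf_cons_self]
          constructor <;> (intro h; omega)
        · rw [List.idxOf_cons_ne _ (Ne.symm hxa), List.idxOf_cons_ne _ (Ne.symm hya),
            List.idxOf_cons_ne _ (Ne.symm hxa), List.idxOf_cons_ne _ (Ne.symm hya)]
          have hxt : x ∈ l := List.mem_of_ne_of_mem hxa hx
          have hyt : y ∈ l := List.mem_of_ne_of_mem hya hy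
          have hxf : x ∈ l.filter (· ≠ a) := by
            rw [List.mem_filter]; exact ⟨hxt, by simpa using hxa⟩
          have hyf : y ∈ l.filter (· ≠ a) := by
            rw [List.mem_filter]; exact ⟨hyt, by simpa using hya⟩
          have h1 := idx_filter_order (· ≠ a) l x y hxt hyt (by simpa using hxa) (by simpa using hya)
          have h2 := idx_dF_order (l.filter (· ≠ a)) x y hxf hyf
          omega
termination_by u => u.length
decreasing_by
  simp only [List.length_cons]
  exact Nat.lt_succ_of_le (List.length_filter_le _ _)

lemma dF_nodup : ∀ (u : Wd), (dF u).Nodup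
  | [] => by simp
  | a :: l => by
      rw [dF_cons, List.nodup_cons]
      constructor
      · intro ha
        rw [mem_dF, List.mem_filter] at ha
        simpa using ha.2
      · exact dF_nodup (l.filter (· ≠ a))
termination_by u => u.length
decreasing_by
  simp only [List.length_cons]
  exact Nat.lt_succ_of_le (List.length_filter_le _ _)

lemma eq_of_nodup_order : ∀ (L1 L2 : Wd), L1.Nodup → L2.Nodup →
    (∀ x, x ∈ L1 ↔ x ∈ L2) →
    (∀ x ∈ L1, ∀ y ∈ L1, (L1.idxOf x < L1.idxOf y ↔ L2.idxOf x < L2.idxOf y)) →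
    L1 = L2
  | [], L2, _, _, hmem, _ => by
      symm
      rw [List.eq_nil_iff_forall_not_mem]
      intro x hx
      exact (by simpa using (hmem x).mpr hx)
  | a :: t1, L2, hn1, hn2, hmem, hord => by
      have haL2 : a ∈ L2 := (hmem a).mp (by simp)
      rcases L2 with _ | ⟨b, t2⟩
      · simp at haL2
      have hab : a = b := by
        by_contra hab
        have hbL1 : b ∈ a :: t1 := (hmem b).mpr (by simp)
        have h1 : (a :: t1).idxOf a < (a :: t1).idxOf b := by
          rw [List.idxOf_cons_self]
          exact (idx_pos_iff a).mpr (Ne.symm hab)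
        have h2 := (hord a (by simp) b hbL1).mp h1
        rw [List.idxOf_cons_self] at h2
        omega
      subst hab
      congr 1
      have hnt1 := (List.nodup_cons.mp hn1)
      have hnt2 := (List.nodup_cons.mp hn2)
      apply eq_of_nodup_order t1 t2 hnt1.2 hnt2.2
      · intro x
        constructor
        · intro hx
          have hxa : x ≠ a := by rintro rfl; exact hnt1.1 hx
          exact List.mem_of_ne_of_mem hxa ((hmem x).mp (by simp [hx]))
        · intro hx
          have hxa : x ≠ a := by rintro rfl; exact hnt2.1 hx
          exact List.mem_of_ne_of_mem hxa ((hmem x).mpr (by simp [hx]))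
      · intro x hx y hy
        have hxa : x ≠ a := by rintro rfl; exact hnt1.1 hx
        have hya : y ≠ a := by rintro rfl; exact hnt1.1 hy
        have := hord x (by simp [hx]) y (by simp [hy])
        rw [List.idxOf_cons_ne _ (Ne.symm hxa), List.idxOf_cons_ne _ (Ne.symm hya),
          List.idxOf_cons_ne _ (Ne.symm hxa), List.idxOf_cons_ne _ (Ne.symm hya)] at this
        omega

/-! ### bridges to FirstOrderSame / LastOrderSame -/

lemma FOS_of_dF {u v : Wd} (h : dF u = dF v) : FirstOrderSame (u, v) := by
  intro x hx y hy
  have hx' : x ∈ u := hx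
  have hy' : y ∈ u := hy
  have hxv : x ∈ v := (mem_iff_of_dF_eq h x).mp hx'
  have hyv : y ∈ v := (mem_iff_of_dF_eq h y).mp hy'
  show u.idxOf x < u.idxOf y ↔ v.idxOf x < v.idxOf y
  rw [idx_dF_order u x y hx' hy', idx_dF_order v x y hxv hyv, h]

lemma dF_of_FOS {u v : Wd} (hmem : ∀ x, x ∈ u ↔ x ∈ v) (h : FirstOrderSame (u, v)) :
    dF u = dF v := by
  apply eq_of_nodup_order _ _ (dF_nodup u) (dF_nodup v)
  · intro x
    rw [mem_dF, mem_dF]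
    exact hmem x
  · intro x hx y hy
    rw [mem_dF] at hx hy
    have hxv : x ∈ v := (hmem x).mp hx
    have hyv : y ∈ v := (hmem y).mp hy
    rw [← idx_dF_order u x y hx hy, ← idx_dF_order v x y hxv hyv]
    exact h x hx y hy

lemma lastIdx_lt_iff {u : Wd} {x y : ℕ} (hx : x ∈ u) (hy : y ∈ u) :
    lastIdx u x < lastIdx u y ↔ u.reverse.idxOf y < u.reverse.idxOf x := by
  have hx' : u.reverse.idxOf x < u.length := by
    rw [← List.length_reverse]
    exact List.idxOf_lt_length_iff.mpr (List.mem_reverse.mpr hx)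
  have hy' : u.reverse.idxOf y < u.length := by
    rw [← List.length_reverse]
    exact List.idxOf_lt_length_iff.mpr (List.mem_reverse.mpr hy)
  unfold lastIdx
  omega

lemma LOS_iff_FOS_rev {u v : Wd} (hmem : ∀ x, x ∈ u ↔ x ∈ v) :
    LastOrderSame (u, v) ↔ FirstOrderSame (u.reverse, v.reverse) := by
  constructor
  · intro h x hx y hy
    have hxu : x ∈ u := List.mem_reverse.mp hx
    have hyu : y ∈ u := List.mem_reverse.mp hy
    have := h y hyu x hxu
    show u.reverse.idxOf x < u.reverse.idxOf y ↔ v.reverse.idxOf x < v.reverse.idxOf y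
    rw [lastIdx_lt_iff hyu hxu, lastIdx_lt_iff ((hmem y).mp hyu) ((hmem x).mp hxu)] at this
    exact this
  · intro h x hx y hy
    have hxu : x ∈ u := hx
    have hyu : y ∈ u := hy
    show lastIdx u x < lastIdx u y ↔ lastIdx v x < lastIdx v y
    rw [lastIdx_lt_iff hxu hyu, lastIdx_lt_iff ((hmem x).mp hxu) ((hmem y).mp hyu)]
    exact h y (List.mem_reverse.mpr hyu) x (List.mem_reverse.mpr hxu)

lemma LOS_of_dF_rev {u v : Wd} (h : dF u.reverse = dF v.reverse) : LastOrderSame (u, v) := by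
  have hmem : ∀ x, x ∈ u ↔ x ∈ v := by
    intro x
    rw [← List.mem_reverse (as := u), ← List.mem_reverse (as := v)]
    exact mem_iff_of_dF_eq h x
  exact (LOS_iff_FOS_rev hmem).mpr (FOS_of_dF h)

lemma dF_rev_of_LOS {u v : Wd} (hmem : ∀ x, x ∈ u ↔ x ∈ v) (h : LastOrderSame (u, v)) :
    dF u.reverse = dF v.reverse := by
  apply dF_of_FOS
  · intro x
    rw [List.mem_reverse, List.mem_reverse]
    exact hmem x
  · exact (LOS_iff_FOS_rev hmem).mp h

/-! ### Part 5: swap and move lemmas -/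

lemma drv_mu_inst {Γ : Set (Wd × Wd)} (hΓ : sigmaMu ∈ Γ) (A B T1 T2 : Wd) :
    Drv Γ (A ++ (T1 ++ (A ++ (B ++ (T2 ++ B))))) (A ++ (T1 ++ (B ++ (A ++ (T2 ++ B))))) := by
  have h := Drv.subst (fun n => if n = 0 then A else if n = 1 then B else if n = 2 then T1 else T2)
    (Drv.base (u := sigmaMu.1) (v := sigmaMu.2) (by simpa using hΓ))
  simpa [sigmaMu, substW_cons] using h

lemma drv_s1_inst {Γ : Set (Wd × Wd)} (hΓ : sigma1 ∈ Γ) (A B T1 T2 : Wd) :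
    Drv Γ (A ++ (B ++ (T1 ++ (A ++ (T2 ++ B))))) (B ++ (A ++ (T1 ++ (A ++ (T2 ++ B))))) := by
  have h := Drv.subst (fun n => if n = 0 then A else if n = 1 then B else if n = 2 then T1 else T2)
    (Drv.base (u := sigma1.1) (v := sigma1.2) (by simpa using hΓ))
  simpa [sigma1, substW_cons] using h

lemma swapA {Γ : Set (Wd × Wd)} (hΓ : sigmaMu ∈ Γ) {p s : Wd} {a b : ℕ}
    (ha : a ∈ p) (hb : b ∈ s) :
    Drv Γ (p ++ [a, b] ++ s) (p ++ [b, a] ++ s) := by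
  obtain ⟨p₁, p₂, rfl⟩ := List.append_of_mem ha
  obtain ⟨s₁, s₂, rfl⟩ := List.append_of_mem hb
  have h := Drv.ctx p₁ s₂ (drv_mu_inst hΓ [a] [b] p₂ s₁)
  simpa using h

lemma swapB {Γ : Set (Wd × Wd)} (hΓ : sigma1 ∈ Γ) {p s : Wd} {a b : ℕ}
    (ha : a ∈ s) (hb : b ∈ s) :
    Drv Γ (p ++ [a, b] ++ s) (p ++ [b, a] ++ s) := by
  by_cases hab : a = b
  · subst hab; exact Drv.refl _
  obtain ⟨sa, sb, rfl⟩ := List.append_of_mem ha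
  by_cases hbs : b ∈ sb
  · obtain ⟨sb1, sb2, rfl⟩ := List.append_of_mem hbs
    have h := Drv.ctx p sb2 (drv_s1_inst hΓ [a] [b] sa sb1)
    simpa using h
  · have hbsa : b ∈ sa := by
      rcases List.mem_append.mp hb with h | h
      · exact h
      · rcases List.mem_cons.mp h with h' | h'
        · exact absurd h'.symm hab
        · exact absurd h' hbs
    obtain ⟨t1, t2, rfl⟩ := List.append_of_mem hbsa
    have h := Drv.symm (Drv.ctx p sb (drv_s1_inst hΓ [b] [a] t1 t2))
    simpa using h

lemma moveLeft {Γ : Set (Wd × Wd)} (hΓ : sigmaMu ∈ Γ) (c : Wd) (x : ℕ) :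
    ∀ (m r : Wd), x ∉ m →
    (∀ m₁ z m₂, m = m₁ ++ z :: m₂ →
      (z ∈ c ++ m₁ ∧ x ∈ r) ∨ (x ∈ c ∧ z ∈ m₂ ++ r) ∨
      (sigma1 ∈ Γ ∧ z ∈ m₂ ++ r ∧ x ∈ r)) →
    Drv Γ (c ++ m ++ x :: r) (c ++ x :: (m ++ r)) := by
  intro m
  induction m using List.reverseRecOn with
  | nil => intro r _ _; simpa using Drv.refl (c ++ x :: r)
  | append_singleton m' z ih =>
      intro r hxm hJ
      have hxm' : x ∉ m' := fun h => hxm (by simp [h])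
      have hxz : x ≠ z := fun h => hxm (by simp [h])
      -- step 1: swap the pair [z, x]
      have hJz := hJ m' z [] (by simp)
      have step1 : Drv Γ (c ++ (m' ++ [z]) ++ x :: r) ((c ++ m') ++ [x, z] ++ r) := by
        have hw : c ++ (m' ++ [z]) ++ x :: r = (c ++ m') ++ [z, x] ++ r := by
          simp [List.append_assoc]
        rw [hw]
        rcases hJz with ⟨hz, hx⟩ | ⟨hx, hz⟩ | ⟨h1, hz, hx⟩
        · exact swapA hΓ hz hx
        · exact Drv.symm (swapA hΓ (by exact List.mem_append.mpr (Or.inl hx))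
            (by simpa using hz))
        · exact swapB h1 (by simpa using hz) hx
      -- step 2: move x across m' by induction
      have step2 : Drv Γ (c ++ m' ++ x :: (z :: r)) (c ++ x :: (m' ++ (z :: r))) := by
        apply ih (z :: r) hxm'
        intro m₁ w m₂ hm
        have := hJ m₁ w (m₂ ++ [z]) (by rw [hm]; simp)
        rcases this with ⟨hw, hx⟩ | ⟨hx, hwz⟩ | ⟨h1, hwz, hx⟩
        · exact Or.inl ⟨hw, by simp [hx]⟩
        · refine Or.inr (Or.inl ⟨hx, ?_⟩)
          simpa [List.mem_append, List.mem_cons, or_assoc] using hwz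
        · refine Or.inr (Or.inr ⟨h1, ?_, by simp [hx]⟩)
          simpa [List.mem_append, List.mem_cons, or_assoc] using hwz
      have hmid : (c ++ m') ++ [x, z] ++ r = c ++ m' ++ x :: (z :: r) := by
        simp [List.append_assoc]
      rw [hmid] at step1
      have := Drv.trans step1 step2
      have hfin : c ++ x :: (m' ++ (z :: r)) = c ++ x :: (m' ++ [z] ++ r) := by simp
      rwa [hfin] at this

/-! ### Part 6: helpers and key step -/

lemma mem_restrict {a : ℕ} {u : Wd} {X : Set ℕ} : a ∈ restrict u X ↔ a ∈ u ∧ a ∈ X := by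
  rw [restrict, List.mem_filter]
  constructor
  · rintro ⟨h1, h2⟩
    exact ⟨h1, @of_decide_eq_true _ (Classical.propDecidable _) h2⟩
  · rintro ⟨h1, h2⟩
    exact ⟨h1, decide_eq_true h2⟩

lemma restrict_append (u v : Wd) (X : Set ℕ) :
    restrict (u ++ v) X = restrict u X ++ restrict v X := by
  simp [restrict]

lemma restrict_cons_mem {x : ℕ} {X : Set ℕ} (hx : x ∈ X) (u : Wd) :
    restrict (x :: u) X = x :: restrict u X := by
  rw [restrict_cons, if_pos hx, List.singleton_append]

lemma first_split {x : ℕ} : ∀ {w : Wd}, x ∈ w → ∃ m r, w = m ++ x :: r ∧ x ∉ m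
  | [], h => absurd h (by simp)
  | a :: t, h => by
      by_cases hax : a = x
      · subst hax; exact ⟨[], t, by simp, by simp⟩
      · have hxt : x ∈ t := List.mem_of_ne_of_mem (Ne.symm hax) h
        obtain ⟨m, r, rfl, hxm⟩ := first_split hxt
        exact ⟨a :: m, r, by simp, by
          intro hmem
          rcases List.mem_cons.mp hmem with h' | h'
          · exact hax h'.symm
          · exact hxm h'⟩

lemma count_U_decomp (c u₁ : Wd) (x y : ℕ) :
    (c ++ x :: u₁).count y = c.count y + (if y = x then 1 else 0) + u₁.count y := by
  simp [List.count_append, List.count_cons]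
  by_cases h : y = x <;> simp [h] <;> omega

lemma keyStep {Γ : Set (Wd × Wd)} (hμ : sigmaMu ∈ Γ) {c u₁ w : Wd} {x : ℕ}
    (hBB : BlockBalanced (c ++ x :: u₁, c ++ w))
    (hL : dF (c ++ x :: u₁).reverse = dF (c ++ w).reverse)
    (hF : dF (c ++ x :: u₁) = dF (c ++ w) ∨ sigma1 ∈ Γ) :
    ∃ w', Drv Γ (c ++ w) (c ++ x :: w') ∧ w.length = w'.length + 1 := by
  have hcnt : ∀ y, (c ++ x :: u₁).count y = (c ++ w).count y :=
    fun y => count_eq_of_BB hBB y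
  have hxw : x ∈ w := by
    have := hcnt x
    simp [List.count_append, List.count_cons] at this
    have hpos : 0 < w.count x := by omega
    exact List.count_pos_iff.mp hpos
  obtain ⟨m, r, rfl, hxm⟩ := first_split hxw
  by_cases hmnil : m = []
  · subst hmnil
    exact ⟨r, by simpa using Drv.refl (c ++ x :: r), by simp⟩
  -- z in m are never in {x} ∪ lin U
  have hmX : ∀ z ∈ m, z ∉ ({x} : Set ℕ) ∪ linW (c ++ x :: u₁) := by
    have hBx := hBB x
    simp only [show ((c ++ x :: u₁, c ++ (m ++ x :: r)).1 : Wd) = c ++ x :: u₁ from rfl] at hBx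
    set X := ({x} : Set ℕ) ∪ linW (c ++ x :: u₁) with hX
    have hxX : x ∈ X := Or.inl rfl
    have h1 : restrict (c ++ x :: u₁) X = restrict c X ++ (x :: restrict u₁ X) := by
      rw [restrict_append, restrict_cons_mem hxX]
    have h2 : restrict (c ++ (m ++ x :: r)) X
        = restrict c X ++ (restrict m X ++ (x :: restrict r X)) := by
      rw [restrict_append, restrict_append, restrict_cons_mem hxX]
    rw [h1, h2] at hBx
    have hcancel : x :: restrict u₁ X = restrict m X ++ (x :: restrict r X) :=
      List.append_cancel_left hBx
    have hmX0 : restrict m X = [] := by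
      cases hmr : restrict m X with
      | nil => rfl
      | cons h t =>
          exfalso
          rw [hmr] at hcancel
          have hxh : x = h := by
            have := hcancel
            simp at this
            exact this.1
          have : h ∈ m := (mem_restrict.mp (hmr ▸ (List.mem_cons_self))).1
          exact hxm (hxh ▸ this)
    intro z hz hzX
    have : z ∈ restrict m X := mem_restrict.mpr ⟨hz, hzX⟩
    rw [hmX0] at this
    simp at this
  have hz2 : ∀ z ∈ m, 2 ≤ (c ++ x :: u₁).count z := by
    intro z hz
    have hnotlin : z ∉ linW (c ++ x :: u₁) := fun h => hmX z hz (Or.inr h)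
    have hne1 : (c ++ x :: u₁).count z ≠ 1 := hnotlin
    have hpos : 0 < (c ++ (m ++ x :: r)).count z := by
      apply List.count_pos_iff.mpr
      simp [hz]
    rw [← hcnt z] at hpos
    omega
  have hzx : ∀ z ∈ m, z ≠ x := fun z hz h => hxm (h ▸ hz)
  -- x ∈ c or x ∈ r
  have hxcr : x ∈ c ∨ x ∈ r := by
    by_contra hcon
    push_neg at hcon
    obtain ⟨hxc, hxr⟩ := hcon
    have hcx : c.count x = 0 := List.count_eq_zero.mpr hxc
    have hrx : r.count x = 0 := List.count_eq_zero.mpr hxr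
    have hmx : m.count x = 0 := List.count_eq_zero.mpr hxm
    have hUx : (c ++ x :: u₁).count x = 1 := by
      have := hcnt x
      simp [List.count_append, List.count_cons, hcx, hrx, hmx] at this ⊢
      omega
    have hxlin : x ∈ linW (c ++ x :: u₁) := hUx
    obtain ⟨z₀, m'', rfl⟩ := List.exists_cons_of_ne_nil hmnil
    have hBz := hBB z₀
    set X := ({z₀} : Set ℕ) ∪ linW (c ++ x :: u₁) with hX
    have hxX : x ∈ X := Or.inr hxlin
    have hzX : z₀ ∈ X := Or.inl rfl
    have h1 : restrict (c ++ x :: u₁) X = restrict c X ++ (x :: restrict u₁ X) := by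
      rw [restrict_append, restrict_cons_mem hxX]
    have h2 : restrict (c ++ (z₀ :: m'' ++ x :: r)) X
        = restrict c X ++ (z₀ :: restrict m'' X ++ (x :: restrict r X)) := by
      rw [restrict_append, restrict_append, restrict_cons_mem hxX, restrict_cons_mem hzX]
    simp only [show ((c ++ x :: u₁, c ++ (z₀ :: m'' ++ x :: r)).1 : Wd) = c ++ x :: u₁ from rfl] at hBz
    rw [h1, h2] at hBz
    have hcancel : x :: restrict u₁ X = z₀ :: restrict m'' X ++ (x :: restrict r X) :=
      List.append_cancel_left hBz
    have : x = z₀ := by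
      simp at hcancel
      exact hcancel.1
    exact hxm (this ▸ List.mem_cons_self)
  have hLOS : LastOrderSame (c ++ x :: u₁, c ++ (m ++ x :: r)) := LOS_of_dF_rev hL
  -- justification for the moves
  have hJ : ∀ m₁ z m₂, m = m₁ ++ z :: m₂ →
      (z ∈ c ++ m₁ ∧ x ∈ r) ∨ (x ∈ c ∧ z ∈ m₂ ++ r) ∨
      (sigma1 ∈ Γ ∧ z ∈ m₂ ++ r ∧ x ∈ r) := by
    intro m₁ z m₂ hm
    have hzm : z ∈ m := by rw [hm]; simp
    have hz2' := hz2 z hzm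
    have hzx' := hzx z hzm
    have hzU : z ∈ c ++ x :: u₁ := by
      apply List.count_pos_iff.mp
      omega
    have hxU : x ∈ c ++ x :: u₁ := by simp
    by_cases hzlater : z ∈ m₂ ++ r
    · by_cases hxc : x ∈ c
      · exact Or.inr (Or.inl ⟨hxc, hzlater⟩)
      · have hxr : x ∈ r := hxcr.resolve_left hxc
        rcases hF with hdF | hs1
        · -- use first-occurrence order to get z ∈ c
          have hFOS := FOS_of_dF hdF
          have hzc : z ∈ c := by
            by_contra hzc
            have hidxVx : (c ++ (m ++ x :: r)).idxOf x = c.length + m.length := by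
              rw [List.idxOf_append_of_notMem hxc, List.idxOf_append_of_notMem hxm,
                List.idxOf_cons_self]
              omega
            have hidxVz : (c ++ (m ++ x :: r)).idxOf z < c.length + m.length := by
              rw [List.idxOf_append_of_notMem hzc, List.idxOf_append_of_mem hzm]
              have := List.idxOf_lt_length_iff.mpr hzm
              omega
            have hVlt : (c ++ (m ++ x :: r)).idxOf z < (c ++ (m ++ x :: r)).idxOf x := by
              omega
            have hUlt := (hFOS z hzU x hxU).mpr hVlt
            have hidxUx : (c ++ x :: u₁).idxOf x = c.length := by
              rw [List.idxOf_append_of_notMem hxc, List.idxOf_cons_self]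
              omega
            have hUlt' : (c ++ x :: u₁).idxOf z < (c ++ x :: u₁).idxOf x := hUlt
            rw [hidxUx, List.idxOf_append_of_notMem hzc] at hUlt'
            omega
          exact Or.inl ⟨List.mem_append.mpr (Or.inl hzc), hxr⟩
        · exact Or.inr (Or.inr ⟨hs1, hzlater, hxr⟩)
    · -- this occurrence of z is its last one
      have hzm₂ : z ∉ m₂ := fun h => hzlater (List.mem_append.mpr (Or.inl h))
      have hzr : z ∉ r := fun h => hzlater (List.mem_append.mpr (Or.inr h))
      have hzlater0 : (m₂ ++ x :: r).count z = 0 := by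
        apply List.count_eq_zero.mpr
        intro hmem
        rcases List.mem_append.mp hmem with h' | h'
        · exact hzm₂ h'
        · rcases List.mem_cons.mp h' with h'' | h''
          · exact hzx' h''
          · exact hzr h''
      have hsplitV : c ++ (m ++ x :: r) = (c ++ m₁) ++ (z :: (m₂ ++ x :: r)) := by
        rw [hm]; simp
      have hcV : (c ++ (m ++ x :: r)).count z
          = (c ++ m₁).count z + ((m₂ ++ x :: r).count z + 1) := by
        rw [hsplitV, List.count_append, List.count_cons_self]
      have hzc₁ : z ∈ c ++ m₁ := by
        apply List.count_pos_iff.mp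
        have h1 := hcnt z
        omega
      have hxr : x ∈ r := by
        by_contra hxr
        -- last-occurrence contradiction
        have hxu₁ : x ∉ u₁ := by
          have h1 := hcnt x
          have hmx : m.count x = 0 := List.count_eq_zero.mpr hxm
          have hrx : r.count x = 0 := List.count_eq_zero.mpr hxr
          have e1 : (c ++ x :: u₁).count x = c.count x + (u₁.count x + 1) := by
            rw [List.count_append, List.count_cons_self]
          have e2 : (c ++ (m ++ x :: r)).count x = c.count x + (m.count x + (r.count x + 1)) := by
            rw [List.count_append, List.count_append, List.count_cons_self]
          intro hmem
          have h3 := List.count_pos_iff.mpr hmem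
          omega
        have hzu₁ : z ∈ u₁ := by
          apply List.count_pos_iff.mp
          have h1 := hcnt z
          have e1 : (c ++ x :: u₁).count z = c.count z + u₁.count z := by
            rw [List.count_append, List.count_cons_of_ne (Ne.symm hzx')]
          have e2 : (c ++ (m ++ x :: r)).count z
              = c.count z + ((m ++ x :: r).count z) := List.count_append
          have e3 : 0 < (m ++ x :: r).count z :=
            List.count_pos_iff.mpr (List.mem_append.mpr (Or.inl hzm))
          omega
        -- V-side: last z before last x
        have hrevV : (c ++ (m ++ x :: r)).reverse
            = r.reverse ++ ([x] ++ (m₂.reverse ++ ([z] ++ (m₁.reverse ++ c.reverse)))) := by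
          rw [hm]; simp
        have hidxVx : (c ++ (m ++ x :: r)).reverse.idxOf x = r.length := by
          rw [hrevV, List.idxOf_append_of_notMem (by simpa using hxr)]
          simp
        have hidxVz : r.length < (c ++ (m ++ x :: r)).reverse.idxOf z := by
          rw [hrevV, List.idxOf_append_of_notMem (by simpa using hzr)]
          have h1 : z ∉ [x] := by simp [hzx']
          rw [List.idxOf_append_of_notMem h1,
            List.idxOf_append_of_notMem (by simpa using hzm₂)]
          simp
        have hVlast : lastIdx (c ++ (m ++ x :: r)) z < lastIdx (c ++ (m ++ x :: r)) x := by
          rw [lastIdx_lt_iff (by rw [hm]; simp) (by simp)]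
          omega
        -- U-side: last x before last z
        have hrevU : (c ++ x :: u₁).reverse = u₁.reverse ++ ([x] ++ c.reverse) := by simp
        have hidxUx : (c ++ x :: u₁).reverse.idxOf x = u₁.length := by
          rw [hrevU, List.idxOf_append_of_notMem (by simpa using hxu₁)]
          simp
        have hidxUz : (c ++ x :: u₁).reverse.idxOf z < u₁.length := by
          rw [hrevU, List.idxOf_append_of_mem (by simpa using hzu₁)]
          have := List.idxOf_lt_length_iff.mpr (List.mem_reverse.mpr hzu₁)
          simpa using this
        have hUlast : lastIdx (c ++ x :: u₁) x < lastIdx (c ++ x :: u₁) z := by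
          rw [lastIdx_lt_iff hxU hzU]
          omega
        have hVlast2 : lastIdx (c ++ (m ++ x :: r)) x < lastIdx (c ++ (m ++ x :: r)) z :=
          (hLOS x hxU z hzU).mp hUlast
        omega
      exact Or.inl ⟨hzc₁, hxr⟩
  refine ⟨m ++ r, ?_, by simp; omega⟩
  have := moveLeft hμ c x m r hxm hJ
  have heq : c ++ (m ++ x :: r) = c ++ m ++ x :: r := by simp
  rw [heq]
  exact this

/-! ### Part 7: main induction -/

lemma linW_eq_of_counts {A B : Wd} (h : ∀ y, A.count y = B.count y) : linW A = linW B := by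
  ext y
  show A.count y = 1 ↔ B.count y = 1
  rw [h y]

lemma BB_trans {A B C : Wd} (h1 : BlockBalanced (A, B)) (h2 : BlockBalanced (B, C)) :
    BlockBalanced (A, C) := by
  intro x
  have hlin : linW B = linW A :=
    linW_eq_of_counts (fun y => (count_eq_of_BB h1 y).symm)
  have h2' : restrict B ({x} ∪ linW B) = restrict C ({x} ∪ linW B) := h2 x
  rw [hlin] at h2'
  have h1' : restrict A ({x} ∪ linW A) = restrict B ({x} ∪ linW A) := h1 x
  exact h1'.trans h2' 

lemma nil_case {Γ : Set (Wd × Wd)} {c v : Wd}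
    (hBB : BlockBalanced (c ++ [], c ++ v)) : Drv Γ (c ++ []) (c ++ v) := by
  have hcnt := count_eq_of_BB hBB
  have hperm : (c ++ ([] : Wd)).Perm (c ++ v) := List.perm_iff_count.mpr (fun y => hcnt y)
  have hlen := hperm.length_eq
  simp at hlen
  subst hlen
  exact Drv.refl _

lemma mainLemma {Γ : Set (Wd × Wd)} (hμ : sigmaMu ∈ Γ)
    (hsound : ∀ a b : Wd, Drv Γ a b →
      BlockBalanced (a, b) ∧ dF a.reverse = dF b.reverse ∧ (dF a = dF b ∨ sigma1 ∈ Γ)) :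
    ∀ (n : ℕ) (u c v : Wd), u.length ≤ n →
      BlockBalanced (c ++ u, c ++ v) →
      dF (c ++ u).reverse = dF (c ++ v).reverse →
      (dF (c ++ u) = dF (c ++ v) ∨ sigma1 ∈ Γ) →
      Drv Γ (c ++ u) (c ++ v) := by
  intro n
  induction n with
  | zero =>
      intro u c v hlen hBB hL hF
      have hu : u = [] := List.length_eq_zero_iff.mp (Nat.le_zero.mp hlen)
      subst hu
      exact nil_case hBB
  | succ n ih =>
      intro u c v hlen hBB hL hF
      cases u with
      | nil => exact nil_case hBB
      | cons x u₁ =>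
          obtain ⟨w', hd, hlenw⟩ := keyStep hμ hBB hL hF
          obtain ⟨hBBvw, hLvw, hFvw⟩ := hsound _ _ hd
          have hBB2 : BlockBalanced (c ++ x :: u₁, c ++ x :: w') := BB_trans hBB hBBvw
          have hL2 : dF (c ++ x :: u₁).reverse = dF (c ++ x :: w').reverse := hL.trans hLvw
          have hF2 : dF (c ++ x :: u₁) = dF (c ++ x :: w') ∨ sigma1 ∈ Γ := by
            rcases hF with h1 | h1
            · rcases hFvw with h2 | h2
              · exact Or.inl (h1.trans h2)
              · exact Or.inr h2
            · exact Or.inr h1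
          have hassoc : ∀ t : Wd, c ++ x :: t = (c ++ [x]) ++ t := by intro t; simp
          have hlen1 : u₁.length ≤ n := by simp at hlen; omega
          have hstep := ih u₁ (c ++ [x]) w' hlen1
            (by rw [← hassoc, ← hassoc]; exact hBB2)
            (by rw [← hassoc, ← hassoc]; exact hL2)
            (by rw [← hassoc, ← hassoc]; exact hF2)
          rw [← hassoc, ← hassoc] at hstep
          exact Drv.trans hstep (Drv.symm hd)

/-! ### Part 8: the two primary cases -/

lemma mem_singleton_mu {f : Wd × Wd} (h : f ∈ ({sigmaMu} : Set (Wd × Wd))) : f = sigmaMu := h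

lemma sound_mu : ∀ a b : Wd, Drv {sigmaMu} a b →
    BlockBalanced (a, b) ∧ dF a.reverse = dF b.reverse ∧
      (dF a = dF b ∨ sigma1 ∈ ({sigmaMu} : Set (Wd × Wd))) := by
  intro a b h
  refine ⟨bb_of_ALQ (drv_ALQ ?_ h), drv_dF ?_ (drv_reverse h), Or.inl (drv_dF ?_ h)⟩
  · rintro f hf
    rw [mem_singleton_mu hf]
    exact ALQ_sigmaMu
  · rintro f hf
    have : (f.1.reverse, f.2.reverse) = sigmaMu := hf
    have h1 : f.1 = sigmaMu.1.reverse := by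
      have := congrArg Prod.fst this
      simp at this
      rw [← this, List.reverse_reverse]
    have h2 : f.2 = sigmaMu.2.reverse := by
      have := congrArg Prod.snd this
      simp at this
      rw [← this, List.reverse_reverse]
    rw [h1, h2]
    exact dF_rev_sigmaMu
  · rintro f hf
    rw [mem_singleton_mu hf]
    exact dF_sigmaMu

lemma sound_1mu : ∀ a b : Wd, Drv {sigma1, sigmaMu} a b →
    BlockBalanced (a, b) ∧ dF a.reverse = dF b.reverse ∧
      (dF a = dF b ∨ sigma1 ∈ ({sigma1, sigmaMu} : Set (Wd × Wd))) := by
  intro a b h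
  refine ⟨bb_of_ALQ (drv_ALQ ?_ h), drv_dF ?_ (drv_reverse h), Or.inr (by left; rfl)⟩
  · rintro f hf
    rcases hf with hf | hf
    · rw [hf]; exact ALQ_sigma1
    · rw [hf]; exact ALQ_sigmaMu
  · rintro f hf
    rcases hf with hf | hf
    · have : (f.1.reverse, f.2.reverse) = sigma1 := hf
      have h1 : f.1 = sigma1.1.reverse := by
        have := congrArg Prod.fst this
        simp at this
        rw [← this, List.reverse_reverse]
      have h2 : f.2 = sigma1.2.reverse := by
        have := congrArg Prod.snd this
        simp at this
        rw [← this, List.reverse_reverse]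
      rw [h1, h2]
      exact dF_rev_sigma1
    · have : (f.1.reverse, f.2.reverse) = sigmaMu := hf
      have h1 : f.1 = sigmaMu.1.reverse := by
        have := congrArg Prod.fst this
        simp at this
        rw [← this, List.reverse_reverse]
      have h2 : f.2 = sigmaMu.2.reverse := by
        have := congrArg Prod.snd this
        simp at this
        rw [← this, List.reverse_reverse]
      rw [h1, h2]
      exact dF_rev_sigmaMu

lemma mem_iff_of_BB {u v : Wd} (hBB : BlockBalanced (u, v)) : ∀ x, x ∈ u ↔ x ∈ v := by
  intro x
  rw [← List.count_pos_iff, ← List.count_pos_iff, count_eq_of_BB hBB x]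

lemma caseMu (u v : Wd) : Consequence (delta {sigmaMu}) (u, v) ↔
    (BlockBalanced (u, v) ∧ FirstOrderSame (u, v) ∧ LastOrderSame (u, v)) := by
  rw [consequence_delta_iff]
  constructor
  · intro h
    have hdrv := rel_of_consequence h
    obtain ⟨hBB, hL, hFo⟩ := sound_mu u v hdrv
    have hF : dF u = dF v := by
      rcases hFo with h1 | h1
      · exact h1
      · exact absurd h1 (by intro hh; cases hh)
    exact ⟨hBB, FOS_of_dF hF, LOS_of_dF_rev hL⟩
  · rintro ⟨hBB, hFOS, hLOS⟩
    apply consequence_of_rel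
    have hmem := mem_iff_of_BB hBB
    have hdF := dF_of_FOS hmem hFOS
    have hLrev := dF_rev_of_LOS hmem hLOS
    have := mainLemma (Γ := {sigmaMu}) rfl sound_mu u.length u [] v (le_refl _)
      (by simpa using hBB) (by simpa using hLrev) (Or.inl (by simpa using hdF))
    simpa using this

lemma case1Mu (u v : Wd) : Consequence (delta {sigma1, sigmaMu}) (u, v) ↔
    (BlockBalanced (u, v) ∧ LastOrderSame (u, v)) := by
  rw [consequence_delta_iff]
  constructor
  · intro h
    have hdrv := rel_of_consequence h
    obtain ⟨hBB, hL, _⟩ := sound_1mu u v hdrv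
    exact ⟨hBB, LOS_of_dF_rev hL⟩
  · rintro ⟨hBB, hLOS⟩
    apply consequence_of_rel
    have hmem := mem_iff_of_BB hBB
    have hLrev := dF_rev_of_LOS hmem hLOS
    have := mainLemma (Γ := {sigma1, sigmaMu}) (by right; rfl) sound_1mu u.length u [] v
      (le_refl _) (by simpa using hBB) (by simpa using hLrev) (Or.inr (by left; rfl))
    simpa using this

/-! ### Part 9: duality and final assembly -/

lemma evalWord_map {M : Type*} [Monoid M] (φ : ℕ → M) (ρ : ℕ → ℕ) (u : Wd) :
    evalWord φ (u.map ρ) = evalWord (φ ∘ ρ) u := by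
  induction u with
  | nil => rfl
  | cons a u ih => simp [ih]

lemma sat_map {M : Type*} [Monoid M] (ρ : ℕ → ℕ) {a b : Wd} (h : Sat M (a, b)) :
    Sat M (a.map ρ, b.map ρ) := by
  intro φ
  show evalWord φ (a.map ρ) = evalWord φ (b.map ρ)
  rw [evalWord_map, evalWord_map]
  exact h (φ ∘ ρ)

lemma evalWord_op {M : Type*} [Monoid M] (φ : ℕ → M) (u : Wd) :
    evalWord (fun n => MulOpposite.op (φ n)) u = MulOpposite.op (evalWord φ u.reverse) := by
  induction u with
  | nil => simp
  | cons a u ih => simp [ih]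

lemma sat_op_iff {M : Type*} [Monoid M] (a b : Wd) :
    Sat (MulOpposite M) (a, b) ↔ Sat M (a.reverse, b.reverse) := by
  constructor
  · intro h φ
    have := h (fun n => MulOpposite.op (φ n))
    show evalWord φ a.reverse = evalWord φ b.reverse
    rw [evalWord_op, evalWord_op] at this
    exact MulOpposite.op_injective this
  · intro h ψ
    have hψ : ψ = fun n => MulOpposite.op ((ψ n).unop) := by funext n; simp
    show evalWord ψ a = evalWord ψ b
    rw [hψ, evalWord_op, evalWord_op]
    exact congrArg _ (h _)

def rho : ℕ → ℕ := fun n => if n = 0 then 1 else if n = 1 then 0 else if n = 2 then 3 else 2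

lemma rev_sigma2_eq : (sigma2.1.reverse, sigma2.2.reverse) = (sigma1.1.map rho, sigma1.2.map rho) := by
  simp [sigma1, sigma2, rho]

lemma rev_sigma1_eq : (sigma1.1.reverse, sigma1.2.reverse) = (sigma2.1.map rho, sigma2.2.map rho) := by
  simp [sigma1, sigma2, rho]

lemma rev_sigmaMu_eq : (sigmaMu.1.reverse, sigmaMu.2.reverse) = (sigmaMu.1.map rho, sigmaMu.2.map rho) := by
  simp [sigmaMu, rho]

lemma consequence_dual (u v : Wd) :
    Consequence {sigma2, sigmaMu} (u, v) ↔ Consequence {sigma1, sigmaMu} (u.reverse, v.reverse) := by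
  constructor
  · intro h M _ hM
    have hMop : ∀ f ∈ ({sigma2, sigmaMu} : Set (Wd × Wd)), Sat (MulOpposite M) f := by
      rintro f (hf | hf) <;> rw [hf]
      · rw [show sigma2 = (sigma2.1, sigma2.2) from rfl, sat_op_iff]
        have := sat_map rho (hM sigma1 (by left; rfl))
        rw [show sigma2.1.reverse = sigma1.1.map rho from congrArg Prod.fst rev_sigma2_eq,
          show sigma2.2.reverse = sigma1.2.map rho from congrArg Prod.snd rev_sigma2_eq]
        exact this
      · rw [show sigmaMu = (sigmaMu.1, sigmaMu.2) from rfl, sat_op_iff]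
        have := sat_map rho (hM sigmaMu (by right; rfl))
        rw [show sigmaMu.1.reverse = sigmaMu.1.map rho from congrArg Prod.fst rev_sigmaMu_eq,
          show sigmaMu.2.reverse = sigmaMu.2.map rho from congrArg Prod.snd rev_sigmaMu_eq]
        exact this
    have := h (MulOpposite M) hMop
    exact (sat_op_iff u v).mp this
  · intro h M _ hM
    have hMop : ∀ f ∈ ({sigma1, sigmaMu} : Set (Wd × Wd)), Sat (MulOpposite M) f := by
      rintro f (hf | hf) <;> rw [hf]
      · rw [show sigma1 = (sigma1.1, sigma1.2) from rfl, sat_op_iff]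
        have := sat_map rho (hM sigma2 (by left; rfl))
        rw [show sigma1.1.reverse = sigma2.1.map rho from congrArg Prod.fst rev_sigma1_eq,
          show sigma1.2.reverse = sigma2.2.map rho from congrArg Prod.snd rev_sigma1_eq]
        exact this
      · rw [show sigmaMu = (sigmaMu.1, sigmaMu.2) from rfl, sat_op_iff]
        have := sat_map rho (hM sigmaMu (by right; rfl))
        rw [show sigmaMu.1.reverse = sigmaMu.1.map rho from congrArg Prod.fst rev_sigmaMu_eq,
          show sigmaMu.2.reverse = sigmaMu.2.map rho from congrArg Prod.snd rev_sigmaMu_eq]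
        exact this
    have := h (MulOpposite M) hMop
    have := (sat_op_iff u.reverse v.reverse).mp this
    simpa using this

lemma restrict_reverse (u : Wd) (X : Set ℕ) :
    restrict u.reverse X = (restrict u X).reverse := by
  rw [restrict, restrict]
  exact List.filter_reverse

lemma linW_reverse (u : Wd) : linW u.reverse = linW u := by
  ext y
  show u.reverse.count y = 1 ↔ u.count y = 1
  rw [List.count_reverse]

lemma BB_rev {u v : Wd} : BlockBalanced (u.reverse, v.reverse) ↔ BlockBalanced (u, v) := by
  constructor
  · intro h x
    have h' : restrict u.reverse ({x} ∪ linW u.reverse) = restrict v.reverse ({x} ∪ linW u.reverse) := h x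
    rw [linW_reverse, restrict_reverse, restrict_reverse, List.reverse_inj] at h'
    exact h'
  · intro h x
    show restrict u.reverse ({x} ∪ linW u.reverse) = restrict v.reverse ({x} ∪ linW u.reverse)
    rw [linW_reverse, restrict_reverse, restrict_reverse, List.reverse_inj]
    exact h x

lemma LOS_rev_iff_FOS {u v : Wd} (hmem : ∀ x, x ∈ u ↔ x ∈ v) :
    LastOrderSame (u.reverse, v.reverse) ↔ FirstOrderSame (u, v) := by
  have hmem' : ∀ x, x ∈ u.reverse ↔ x ∈ v.reverse := by
    intro x
    rw [List.mem_reverse, List.mem_reverse]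
    exact hmem x
  rw [LOS_iff_FOS_rev hmem', List.reverse_reverse, List.reverse_reverse]

lemma case2Mu (u v : Wd) : Consequence (delta {sigma2, sigmaMu}) (u, v) ↔
    (BlockBalanced (u, v) ∧ FirstOrderSame (u, v)) := by
  rw [consequence_delta_iff, consequence_dual, ← consequence_delta_iff, case1Mu]
  constructor
  · rintro ⟨hBBr, hLOSr⟩
    have hBB : BlockBalanced (u, v) := BB_rev.mp hBBr
    have hmem := mem_iff_of_BB hBB
    exact ⟨hBB, (LOS_rev_iff_FOS hmem).mp hLOSr⟩
  · rintro ⟨hBB, hFOS⟩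
    have hmem := mem_iff_of_BB hBB
    exact ⟨BB_rev.mpr hBB, (LOS_rev_iff_FOS hmem).mpr hFOS⟩


theorem stmt16 :
    (∀ e : Wd × Wd, Consequence (delta {sigmaMu}) e ↔
      (BlockBalanced e ∧ FirstOrderSame e ∧ LastOrderSame e)) ∧
    (∀ e : Wd × Wd, Consequence (delta {sigma1, sigmaMu}) e ↔
      (BlockBalanced e ∧ LastOrderSame e)) ∧
    (∀ e : Wd × Wd, Consequence (delta {sigma2, sigmaMu}) e ↔
      (BlockBalanced e ∧ FirstOrderSame e)) := by
  refine ⟨fun e => ?_, fun e => ?_, fun e => ?_⟩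
  · obtain ⟨u, v⟩ := e
    exact caseMu u v
  · obtain ⟨u, v⟩ := e
    exact case1Mu u v
  · obtain ⟨u, v⟩ := e
    exact case2Mu u v
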